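/- In the setting of reduction of a moment map target: let 𝔡 be metrized with 𝔠 a subalgebra, 𝔨 = 𝔠^⊥ ⊆ 𝔠, 𝔡' = 𝔠/𝔨 with the induced metric, and let 𝔡_q ⊆ 𝔡 be a Lagrangian subspace with 𝔡_q ∩ 𝔨 = 0. Then the image of 𝔡_q ∩ 𝔠 under the quotient map 𝔠 → 𝔡' is a Lagrangian subspace of 𝔡'. -/

import Mathlib

/-- The orthogonal complement of a subspace with respect to a bilinear form. -/
def orth {V : Type*} [AddCommGroup V] [Module ℝ V]
    (B : V →ₗ[ℝ] V →ₗ[ℝ] ℝ) (W : Submodule ℝ V) : Submodule ℝ V where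
  carrier := {x | ∀ w ∈ W, B x w = 0}
  add_mem' := by
    intro a b ha hb w hw
    simp only [Set.mem_setOf_eq] at *
    rw [map_add, LinearMap.add_apply, ha w hw, hb w hw, add_zero]
  zero_mem' := by intro w hw; simp
  smul_mem' := by
    intro c a ha w hw
    simp only [Set.mem_setOf_eq] at *
    rw [map_smul, LinearMap.smul_apply, ha w hw, smul_zero]

lemma mem_orth {V : Type*} [AddCommGroup V] [Module ℝ V]
    (B : V →ₗ[ℝ] V →ₗ[ℝ] ℝ) (W : Submodule ℝ V) (x : V) :
    x ∈ orth B W ↔ ∀ w ∈ W, B x w = 0 := Iff.rfl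

lemma orth_eq_orthogonal {V : Type*} [AddCommGroup V] [Module ℝ V]
    (B : V →ₗ[ℝ] V →ₗ[ℝ] ℝ) (hsymm : ∀ x y : V, B x y = B y x)
    (W : Submodule ℝ V) : orth B W = LinearMap.BilinForm.orthogonal B W := by
  ext x
  simp only [mem_orth, LinearMap.BilinForm.mem_orthogonal_iff, LinearMap.BilinForm.IsOrtho]
  constructor
  · intro h w hw; rw [hsymm]; exact h w hw
  · intro h w hw; rw [hsymm]; exact h w hw

lemma orthogonal_sup' {V : Type*} [AddCommGroup V] [Module ℝ V]
    (B : V →ₗ[ℝ] V →ₗ[ℝ] ℝ) (U W : Submodule ℝ V) :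
    LinearMap.BilinForm.orthogonal B (U ⊔ W) =
      LinearMap.BilinForm.orthogonal B U ⊓ LinearMap.BilinForm.orthogonal B W := by
  ext x
  simp only [LinearMap.BilinForm.mem_orthogonal_iff, Submodule.mem_inf]
  constructor
  · intro h
    exact ⟨fun n hn => h n (Submodule.mem_sup_left hn),
      fun n hn => h n (Submodule.mem_sup_right hn)⟩
  · rintro ⟨h1, h2⟩ n hn
    rcases Submodule.mem_sup.mp hn with ⟨a, ha, b, hb, rfl⟩
    have : B (a + b) x = B a x + B b x := by simp
    rw [this, h1 a ha, h2 b hb, add_zero]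

lemma orth_inf {V : Type*} [AddCommGroup V] [Module ℝ V] [FiniteDimensional ℝ V]
    (B : V →ₗ[ℝ] V →ₗ[ℝ] ℝ) (hsymm : ∀ x y : V, B x y = B y x)
    (hnondeg : ∀ x : V, (∀ y : V, B x y = 0) → x = 0)
    (U W : Submodule ℝ V) :
    orth B (U ⊓ W) = orth B U ⊔ orth B W := by
  have hrefl : B.IsRefl := fun x y h => by rw [hsymm]; exact h
  have hnd : LinearMap.BilinForm.Nondegenerate B :=
    ⟨hnondeg, fun y h => hnondeg y (fun x => by rw [hsymm]; exact h x)⟩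
  have key : ∀ N : Submodule ℝ V,
      LinearMap.BilinForm.orthogonal B (LinearMap.BilinForm.orthogonal B N) = N :=
    LinearMap.BilinForm.orthogonal_orthogonal hnd hrefl
  rw [orth_eq_orthogonal B hsymm, orth_eq_orthogonal B hsymm, orth_eq_orthogonal B hsymm]
  conv_lhs => rw [← key U, ← key W]
  rw [← orthogonal_sup', key]

/-- Reduction of Lagrangian subspaces: with 𝔨 = 𝔠^⊥ ⊆ 𝔠 and
𝔡' = 𝔠/𝔨 carrying the induced metric B' (characterized by B'(π x, π y) = B(x,y)),
if 𝔡_q ⊆ 𝔡 is Lagrangian with 𝔡_q ∩ 𝔨 = 0 then the image of 𝔡_q ∩ 𝔠 under the quotient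
map 𝔠 → 𝔡' is a Lagrangian subspace of 𝔡'. -/
theorem stmt5 (𝔡 : Type*) [AddCommGroup 𝔡] [Module ℝ 𝔡] [FiniteDimensional ℝ 𝔡]
    (B : 𝔡 →ₗ[ℝ] 𝔡 →ₗ[ℝ] ℝ)
    (hsymm : ∀ x y : 𝔡, B x y = B y x)
    (hnondeg : ∀ x : 𝔡, (∀ y : 𝔡, B x y = 0) → x = 0)
    (𝔠 : Submodule ℝ 𝔡) (hco : orth B 𝔠 ≤ 𝔠)
    -- the ideal 𝔨 = 𝔠^⊥, viewed inside ↥𝔠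
    (K : Submodule ℝ ↥𝔠) (hKdef : K = (orth B 𝔠).comap 𝔠.subtype)
    -- the induced metric on 𝔡' = 𝔠/𝔨
    (B' : (↥𝔠 ⧸ K) →ₗ[ℝ] (↥𝔠 ⧸ K) →ₗ[ℝ] ℝ)
    (hB' : ∀ x y : ↥𝔠, B' (K.mkQ x) (K.mkQ y) = B (x : 𝔡) (y : 𝔡))
    -- a Lagrangian subspace intersecting 𝔨 trivially
    (Dq : Submodule ℝ 𝔡) (hDq : orth B Dq = Dq) (hfree : Dq ⊓ orth B 𝔠 = ⊥) :
    orth B' (Submodule.map K.mkQ (Dq.comap 𝔠.subtype)) =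
      Submodule.map K.mkQ (Dq.comap 𝔠.subtype) := by
  have hiso : ∀ x ∈ Dq, ∀ y ∈ Dq, B x y = 0 := by
    intro x hx y hy
    rw [← hDq] at hx
    exact hx y hy
  ext ξ
  constructor
  · intro hξ
    obtain ⟨c, rfl⟩ := K.mkQ_surjective ξ
    -- c is B-orthogonal to Dq ⊓ 𝔠
    have hc1 : (c : 𝔡) ∈ orth B (Dq ⊓ 𝔠) := by
      intro w hw
      obtain ⟨hwD, hwC⟩ := Submodule.mem_inf.mp hw
      have hmem : K.mkQ ⟨w, hwC⟩ ∈ Submodule.map K.mkQ (Dq.comap 𝔠.subtype) :=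
        Submodule.mem_map_of_mem (by simpa [Submodule.mem_comap] using hwD)
      have := hξ _ hmem
      rwa [hB'] at this
    rw [orth_inf B hsymm hnondeg, hDq] at hc1
    obtain ⟨d, hd, k, hk, hdk⟩ := Submodule.mem_sup.mp hc1
    have hkC : k ∈ 𝔠 := hco hk
    have hdC : d ∈ 𝔠 := by
      have : d = (c : 𝔡) - k := by rw [← hdk]; abel
      rw [this]; exact 𝔠.sub_mem c.2 hkC
    refine ⟨⟨d, hdC⟩, by simpa [Submodule.mem_comap] using hd, ?_⟩
    have hck : c - ⟨d, hdC⟩ ∈ K := by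
      rw [hKdef]
      simpa [Submodule.mem_comap, ← hdk] using hk
    have := (Submodule.Quotient.eq K).mpr hck
    simp only [Submodule.mkQ_apply]
    exact this.symm
  · rintro ⟨d, hd, rfl⟩ w hw
    obtain ⟨e, he, rfl⟩ := hw
    rw [hB']
    exact hiso _ (Submodule.mem_comap.mp hd) _ (Submodule.mem_comap.mp he)
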